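/- arXiv:1512.06163 — 3 statements merged into one kernel-verified Lean document; each statement's English description precedes it below -/
import Mathlib

section
/- Let λ > 0, M > 0, c ≥ 0 and let f : (0,∞) → [0,M] be measurable with √t · f(t) → c as t → ∞. Let (r_N) be a sequence in (0,1] with r_N → 0, let (D_N) be a sequence of positive reals with D_N → 1, and let (t_N) be a sequence of positive reals with t_N → ∞. Then r_N^{−1} ∫_0^{t_N} e^{−2λs} f(D_N s / r_N²) ds → c ∫_0^∞ e^{−2λs} s^{−1/2} ds as N → ∞. -/
open MeasureTheory Filter
open scoped Topology

theorem drift_load_integral_dim_one (lam M c : ℝ) (hlam : 0 < lam) (hM : 0 < M)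
    (hc : 0 ≤ c) (f : ℝ → ℝ) (hfm : Measurable f)
    (hf : ∀ t ∈ Set.Ioi (0 : ℝ), f t ∈ Set.Icc (0 : ℝ) M)
    (hfc : Tendsto (fun t => Real.sqrt t * f t) atTop (𝓝 c))
    (r : ℕ → ℝ) (hr : ∀ N, r N ∈ Set.Ioc (0 : ℝ) 1)
    (hr0 : Tendsto r atTop (𝓝 0))
    (D : ℕ → ℝ) (hD : ∀ N, 0 < D N) (hD1 : Tendsto D atTop (𝓝 1))
    (t : ℕ → ℝ) (ht : ∀ N, 0 < t N) (htop : Tendsto t atTop atTop) :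
    Tendsto (fun N => (r N)⁻¹ *
        ∫ s in Set.Ioc 0 (t N), Real.exp (-2 * lam * s) * f (D N * s / r N ^ 2))
      atTop
      (𝓝 (c * ∫ s in Set.Ioi (0 : ℝ), Real.exp (-2 * lam * s) * s ^ (-(1 : ℝ) / 2))) := by
  -- rpow vs sqrt
  have hrpow : ∀ s : ℝ, 0 < s → s ^ (-(1 : ℝ) / 2) = (Real.sqrt s)⁻¹ := by
    intro s hs
    rw [neg_div, Real.rpow_neg hs.le, Real.sqrt_eq_rpow]
  -- Step 0 : uniform bound C on √u * f u
  obtain ⟨T, hT⟩ : ∃ T : ℝ, ∀ u ≥ T, Real.sqrt u * f u < c + 1 :=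
    eventually_atTop.mp (hfc.eventually_lt_const (lt_add_one c))
  set C : ℝ := max (c + 1) (Real.sqrt T * M) with hCdef
  have hCpos : 0 < C := lt_of_lt_of_le (by linarith) (le_max_left _ _)
  have hCb : ∀ u : ℝ, 0 < u → Real.sqrt u * f u ≤ C := by
    intro u hu
    rcases le_or_gt T u with h | h
    · exact le_trans (hT u h).le (le_max_left _ _)
    · refine le_trans ?_ (le_max_right _ _)
      have h1 : f u ≤ M := (hf u hu).2
      have h0 : 0 ≤ f u := (hf u hu).1
      have h2 : Real.sqrt u ≤ Real.sqrt T := Real.sqrt_le_sqrt h.le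
      nlinarith [Real.sqrt_nonneg u]
  have hfb : ∀ u : ℝ, 0 < u → f u ≤ C / Real.sqrt u := by
    intro u hu
    have hsu : 0 < Real.sqrt u := Real.sqrt_pos.mpr hu
    rw [le_div_iff₀ hsu, mul_comm]
    exact hCb u hu
  -- the functions appearing in dominated convergence
  set F : ℕ → ℝ → ℝ := fun N =>
    Set.indicator (Set.Ioc 0 (t N))
      (fun s => (r N)⁻¹ * (Real.exp (-2 * lam * s) * f (D N * s / r N ^ 2))) with hFdef
  set g : ℝ → ℝ := fun s => c * (Real.exp (-2 * lam * s) * s ^ (-(1 : ℝ) / 2)) with hgdef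
  set bound : ℝ → ℝ :=
    fun s => Real.sqrt 2 * C * (Real.exp (-2 * lam * s) * (Real.sqrt s)⁻¹) with hbdef
  -- key algebraic identity : (r)⁻¹ with √(D s / r²)
  have hsqrt_id : ∀ (Dv s rv : ℝ), 0 < Dv → 0 < s → 0 < rv →
      Real.sqrt (Dv * s / rv ^ 2) = Real.sqrt (Dv * s) / rv := by
    intro Dv s rv hDv hs hrv
    rw [Real.sqrt_div' , Real.sqrt_sq hrv.le] <;> try positivity
  -- measurability of the inner function
  have hmeasN : ∀ N, Measurable (F N) := by
    intro N
    refine Measurable.indicator ?_ measurableSet_Ioc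
    refine measurable_const.mul (((Real.measurable_exp.comp
      ((measurable_const.mul measurable_id)))).mul (hfm.comp ?_))
    exact (measurable_const.mul measurable_id).div_const _
  -- integrability of the bound
  have hboundint : Integrable bound (volume.restrict (Set.Ioi (0 : ℝ))) := by
    have hexpmeas : Measurable fun s : ℝ => Real.exp (-2 * lam * s) * (Real.sqrt s)⁻¹ :=
      (Real.measurable_exp.comp (measurable_const.mul measurable_id)).mul
        (Real.continuous_sqrt.measurable.inv)
    have h1 : IntegrableOn (fun s : ℝ => Real.exp (-2 * lam * s) * (Real.sqrt s)⁻¹)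
        (Set.Ioc (0 : ℝ) 1) := by
      have hbase : IntegrableOn (fun s : ℝ => s ^ (-(1 : ℝ) / 2)) (Set.Ioc (0 : ℝ) 1) := by
        have h := intervalIntegral.intervalIntegrable_rpow'
          (a := 0) (b := 1) (r := -(1 : ℝ) / 2) (by norm_num)
        rwa [intervalIntegrable_iff_integrableOn_Ioc_of_le zero_le_one] at h
      refine hbase.mono' hexpmeas.aestronglyMeasurable ?_
      filter_upwards [ae_restrict_mem measurableSet_Ioc] with s hs
      have hs0 : 0 < s := hs.1
      have hsu : 0 < Real.sqrt s := Real.sqrt_pos.mpr hs0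
      have he : Real.exp (-2 * lam * s) ≤ 1 := by
        rw [Real.exp_le_one_iff]
        nlinarith
      rw [Real.norm_eq_abs, abs_of_nonneg (by positivity), hrpow s hs0]
      calc Real.exp (-2 * lam * s) * (Real.sqrt s)⁻¹ ≤ 1 * (Real.sqrt s)⁻¹ := by
            apply mul_le_mul_of_nonneg_right he (by positivity)
        _ = (Real.sqrt s)⁻¹ := one_mul _
    have h2 : IntegrableOn (fun s : ℝ => Real.exp (-2 * lam * s) * (Real.sqrt s)⁻¹)
        (Set.Ioi (1 : ℝ)) := by
      refine (exp_neg_integrableOn_Ioi 1 (by linarith : (0:ℝ) < 2 * lam)).mono'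
        hexpmeas.aestronglyMeasurable ?_
      filter_upwards [ae_restrict_mem measurableSet_Ioi] with s hs
      have hs1 : (1:ℝ) ≤ s := le_of_lt hs
      have hsu : (1:ℝ) ≤ Real.sqrt s := by
        rw [show (1:ℝ) = Real.sqrt 1 by simp]
        exact Real.sqrt_le_sqrt hs1
      have hinv : (Real.sqrt s)⁻¹ ≤ 1 := by
        rw [inv_le_one_iff₀]; right; exact hsu
      rw [Real.norm_eq_abs, abs_of_nonneg (by positivity)]
      calc Real.exp (-2 * lam * s) * (Real.sqrt s)⁻¹ ≤ Real.exp (-2 * lam * s) * 1 :=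
            mul_le_mul_of_nonneg_left hinv (Real.exp_pos _).le
        _ = Real.exp (-(2 * lam) * s) := by rw [mul_one]; ring_nf
    have hsub : Set.Ioi (0 : ℝ) ⊆ Set.Ioc (0:ℝ) 1 ∪ Set.Ioi 1 := by
      intro x hx
      rcases le_or_gt x 1 with h | h
      · exact Or.inl ⟨hx, h⟩
      · exact Or.inr h
    exact ((h1.union h2).mono_set hsub).const_mul _
  -- domination
  have hdom : ∀ᶠ N in atTop, ∀ᵐ s ∂(volume.restrict (Set.Ioi (0:ℝ))), ‖F N s‖ ≤ bound s := by
    have hDhalf : ∀ᶠ N in atTop, (1:ℝ) / 2 < D N :=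
      hD1.eventually_const_lt (by norm_num)
    filter_upwards [hDhalf] with N hDN
    filter_upwards [ae_restrict_mem measurableSet_Ioi] with s hs
    have hs0 : 0 < s := hs
    have hbnn : 0 ≤ bound s := by
      have : 0 < Real.sqrt s := Real.sqrt_pos.mpr hs0
      have := hCpos
      positivity
    by_cases hmem : s ∈ Set.Ioc 0 (t N)
    · have hrN := (hr N).1
      have hDN0 := hD N
      have hu : 0 < D N * s / r N ^ 2 := by positivity
      have hfu0 : 0 ≤ f (D N * s / r N ^ 2) := (hf _ hu).1
      have hFval : F N s = (r N)⁻¹ * (Real.exp (-2 * lam * s) * f (D N * s / r N ^ 2)) := by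
        rw [hFdef]; simp [Set.indicator_of_mem hmem]
      have hDs : 0 < D N * s := by positivity
      have hsDs : 0 < Real.sqrt (D N * s) := Real.sqrt_pos.mpr hDs
      have hss : 0 < Real.sqrt s := Real.sqrt_pos.mpr hs0
      have key : (r N)⁻¹ * f (D N * s / r N ^ 2) ≤ C / Real.sqrt (D N * s) := by
        have h1 : f (D N * s / r N ^ 2) ≤ C / Real.sqrt (D N * s / r N ^ 2) := hfb _ hu
        have h2 : Real.sqrt (D N * s / r N ^ 2) = Real.sqrt (D N * s) / r N :=
          hsqrt_id _ _ _ hDN0 hs0 hrN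
        rw [h2] at h1
        have h3 : C / (Real.sqrt (D N * s) / r N) = r N * (C / Real.sqrt (D N * s)) := by
          field_simp
        rw [h3] at h1
        calc (r N)⁻¹ * f (D N * s / r N ^ 2)
            ≤ (r N)⁻¹ * (r N * (C / Real.sqrt (D N * s))) :=
              mul_le_mul_of_nonneg_left h1 (by positivity)
          _ = C / Real.sqrt (D N * s) := by field_simp
      have hcomp : C / Real.sqrt (D N * s) ≤ Real.sqrt 2 * C * (Real.sqrt s)⁻¹ := by
        have hle : s ≤ 2 * (D N * s) := by nlinarith
        have h4 : Real.sqrt s ≤ Real.sqrt 2 * Real.sqrt (D N * s) := by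
          rw [← Real.sqrt_mul (by norm_num : (0:ℝ) ≤ 2)]
          exact Real.sqrt_le_sqrt hle
        rw [div_le_iff₀ hsDs]
        calc C = C * (Real.sqrt s)⁻¹ * Real.sqrt s := by field_simp
          _ ≤ C * (Real.sqrt s)⁻¹ * (Real.sqrt 2 * Real.sqrt (D N * s)) := by
              apply mul_le_mul_of_nonneg_left h4 (by positivity)
          _ = Real.sqrt 2 * C * (Real.sqrt s)⁻¹ * Real.sqrt (D N * s) := by ring
      have hFnn : 0 ≤ F N s := by
        rw [hFval]; positivity
      rw [Real.norm_eq_abs, abs_of_nonneg hFnn, hFval, hbdef]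
      have hexp : 0 < Real.exp (-2 * lam * s) := Real.exp_pos _
      calc (r N)⁻¹ * (Real.exp (-2 * lam * s) * f (D N * s / r N ^ 2))
          = Real.exp (-2 * lam * s) * ((r N)⁻¹ * f (D N * s / r N ^ 2)) := by ring
        _ ≤ Real.exp (-2 * lam * s) * (Real.sqrt 2 * C * (Real.sqrt s)⁻¹) :=
            mul_le_mul_of_nonneg_left (key.trans hcomp) hexp.le
        _ = Real.sqrt 2 * C * (Real.exp (-2 * lam * s) * (Real.sqrt s)⁻¹) := by ring
    · have : F N s = 0 := by rw [hFdef]; simp [Set.indicator_of_notMem hmem]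
      rw [this, norm_zero]; exact hbnn
  -- pointwise convergence
  have hlim : ∀ᵐ s ∂(volume.restrict (Set.Ioi (0:ℝ))),
      Tendsto (fun N => F N s) atTop (𝓝 (g s)) := by
    filter_upwards [ae_restrict_mem measurableSet_Ioi] with s hs
    have hs0 : 0 < s := hs
    have hss : 0 < Real.sqrt s := Real.sqrt_pos.mpr hs0
    -- u_N → ∞
    have hutop : Tendsto (fun N => D N * s / r N ^ 2) atTop atTop := by
      have h1 : Tendsto (fun N => D N * s) atTop (𝓝 s) := by
        simpa using hD1.mul_const s
      have h2 : Tendsto (fun N => r N ^ 2) atTop (𝓝[>] 0) := by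
        apply tendsto_nhdsWithin_of_tendsto_nhds_of_eventually_within
        · simpa using (hr0.mul hr0).congr (fun N => (sq (r N)).symm)
        · exact Eventually.of_forall fun N => pow_pos (hr N).1 2
      have h3 : Tendsto (fun N => (r N ^ 2)⁻¹) atTop atTop := h2.inv_tendsto_nhdsGT_zero
      have := Tendsto.pos_mul_atTop hs0 h1 h3
      simpa [div_eq_mul_inv] using this
    -- the product √u f u → c
    have hprod : Tendsto (fun N => Real.sqrt (D N * s / r N ^ 2) * f (D N * s / r N ^ 2))
        atTop (𝓝 c) := hfc.comp hutop
    -- (√(D N s))⁻¹ → (√s)⁻¹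
    have hinv : Tendsto (fun N => (Real.sqrt (D N * s))⁻¹) atTop (𝓝 ((Real.sqrt s)⁻¹)) := by
      have h1 : Tendsto (fun N => D N * s) atTop (𝓝 s) := by simpa using hD1.mul_const s
      have h2 : Tendsto (fun N => Real.sqrt (D N * s)) atTop (𝓝 (Real.sqrt s)) :=
        (Real.continuous_sqrt.tendsto s).comp h1
      exact h2.inv₀ (ne_of_gt hss)
    have hmain : Tendsto (fun N => Real.exp (-2 * lam * s) *
        (Real.sqrt (D N * s / r N ^ 2) * f (D N * s / r N ^ 2) * (Real.sqrt (D N * s))⁻¹))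
        atTop (𝓝 (Real.exp (-2 * lam * s) * (c * (Real.sqrt s)⁻¹))) :=
      tendsto_const_nhds.mul (hprod.mul hinv)
    have hgval : g s = Real.exp (-2 * lam * s) * (c * (Real.sqrt s)⁻¹) := by
      rw [hgdef]; simp only []; rw [hrpow s hs0]; ring
    rw [hgval]
    refine hmain.congr' ?_
    filter_upwards [htop.eventually_ge_atTop s] with N hN
    have hmem : s ∈ Set.Ioc 0 (t N) := ⟨hs0, hN⟩
    have hrN := (hr N).1
    have hDN0 := hD N
    have hDs : 0 < D N * s := by positivity
    have hsDs : 0 < Real.sqrt (D N * s) := Real.sqrt_pos.mpr hDs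
    have h2 : Real.sqrt (D N * s / r N ^ 2) = Real.sqrt (D N * s) / r N :=
      hsqrt_id _ _ _ hDN0 hs0 hrN
    have hFval : F N s = (r N)⁻¹ * (Real.exp (-2 * lam * s) * f (D N * s / r N ^ 2)) := by
      rw [hFdef]; simp [Set.indicator_of_mem hmem]
    rw [hFval, h2]
    field_simp
  -- measurability (a.e. strong) of F N
  have hFmeas : ∀ᶠ N in atTop, AEStronglyMeasurable (F N) (volume.restrict (Set.Ioi (0:ℝ))) :=
    Eventually.of_forall fun N => (hmeasN N).aestronglyMeasurable
  -- apply dominated convergence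
  have key := tendsto_integral_filter_of_dominated_convergence
    (μ := volume.restrict (Set.Ioi (0:ℝ))) (F := F) (f := g) bound hFmeas hdom hboundint hlim
  -- identify the integrals
  have hFint : ∀ N, ∫ s in Set.Ioi (0:ℝ), F N s =
      (r N)⁻¹ * ∫ s in Set.Ioc 0 (t N), Real.exp (-2 * lam * s) * f (D N * s / r N ^ 2) := by
    intro N
    rw [hFdef]
    rw [setIntegral_indicator measurableSet_Ioc]
    have hinter : Set.Ioi (0:ℝ) ∩ Set.Ioc 0 (t N) = Set.Ioc 0 (t N) := by
      apply Set.inter_eq_right.mpr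
      exact fun x hx => hx.1
    rw [hinter]
    exact integral_const_mul _ _
  have hgint : ∫ s in Set.Ioi (0:ℝ), g s =
      c * ∫ s in Set.Ioi (0:ℝ), Real.exp (-2 * lam * s) * s ^ (-(1:ℝ)/2) := by
    rw [hgdef]
    exact integral_const_mul _ _
  rw [hgint] at key
  refine key.congr fun N => ?_
  exact hFint N
end

section
/- Let d ≥ 1 and r > 0, and define ψ : ℝ^d → ℝ by ψ(y) = V_r(0,y) / V_r². Then ψ is a probability density (∫_{ℝ^d} ψ(y) dy = 1), and for every n ≥ 1 the n-fold convolution power ψ^{*n} (with ψ^{*1} = ψ and ψ^{*(n+1)} = ψ^{*n} * ψ) is continuous on ℝ^d and satisfies ψ^{*n}(y) ≥ ψ^{*n}(y') for all y, y' ∈ ℝ^d with |y| ≤ |y'|. -/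
open MeasureTheory Metric
open scoped RealInnerProductSpace Convolution

set_option maxHeartbeats 1000000

variable {d : ℕ}

lemma aux_refl (w : EuclideanSpace ℝ (Fin d)) (hw : w ≠ 0) (z : EuclideanSpace ℝ (Fin d)) :
    Submodule.reflection (ℝ ∙ w)ᗮ z = z - (2 * ⟪w, z⟫ / ‖w‖ ^ 2) • w := by
  have hw' : ‖w‖ ≠ 0 := norm_ne_zero_iff.mpr hw
  set c : ℝ := ⟪w, z⟫ / ‖w‖ ^ 2 with hc
  have hz : z - c • w ∈ (ℝ ∙ w)ᗮ := by
    rw [Submodule.mem_orthogonal_singleton_iff_inner_right, inner_sub_right,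
      real_inner_smul_right, real_inner_self_eq_norm_sq, hc]
    field_simp
    ring
  have h1 : Submodule.reflection (ℝ ∙ w)ᗮ (z - c • w) = z - c • w := Submodule.reflection_mem_subspace_eq_self hz
  have h2 : Submodule.reflection (ℝ ∙ w)ᗮ w = -w := Submodule.reflection_orthogonalComplement_singleton_eq_neg w
  have h3 : z = (z - c • w) + c • w := by abel
  calc Submodule.reflection (ℝ ∙ w)ᗮ z = Submodule.reflection (ℝ ∙ w)ᗮ ((z - c • w) + c • w) := by rw [← h3]
    _ = (z - c • w) + c • (-w) := by rw [map_add, h1, LinearIsometryEquiv.map_smul, h2]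
    _ = z - (2 * ⟪w, z⟫ / ‖w‖ ^ 2) • w := by
        rw [hc]; match_scalars <;> ring

section auxac
variable {F : Type*} [NormedAddCommGroup F] [InnerProductSpace ℝ F]

lemma auxA (z w : F) : ‖z + (2:ℝ)⁻¹ • w‖ ^ 2 - ‖z - (2:ℝ)⁻¹ • w‖ ^ 2 = 2 * ⟪w, z⟫ := by
  rw [norm_add_sq_real, norm_sub_sq_real, real_inner_smul_right, real_inner_comm]
  ring

lemma auxB (x w : F) (c : ℝ) :
    ‖x - c • w‖ ^ 2 - ‖x‖ ^ 2 = -2 * c * ⟪w, x⟫ + c ^ 2 * ‖w‖ ^ 2 := by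
  rw [norm_sub_sq_real, real_inner_smul_right, norm_smul, Real.norm_eq_abs, mul_pow, sq_abs,
    real_inner_comm]
  ring

lemma auxC (u v : F) : ⟪v - u, (2:ℝ)⁻¹ • (u + v)⟫ = (2:ℝ)⁻¹ * (‖v‖ ^ 2 - ‖u‖ ^ 2) := by
  rw [real_inner_smul_right, inner_sub_left, inner_add_right, inner_add_right,
    ← real_inner_self_eq_norm_sq, ← real_inner_self_eq_norm_sq, real_inner_comm u v]
  ring

end auxac

lemma conv_mono (f g : EuclideanSpace ℝ (Fin d) → ℝ)
    (hf : ∀ y y' : EuclideanSpace ℝ (Fin d), ‖y‖ ≤ ‖y'‖ → f y' ≤ f y)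
    (hg : ∀ y y' : EuclideanSpace ℝ (Fin d), ‖y‖ ≤ ‖y'‖ → g y' ≤ g y)
    (hint : ∀ u : EuclideanSpace ℝ (Fin d), Integrable (fun x => f (u - x) * g x))
    (u v : EuclideanSpace ℝ (Fin d)) (huv : ‖u‖ ≤ ‖v‖) :
    (∫ x, f (v - x) * g x) ≤ ∫ x, f (u - x) * g x := by
  rcases eq_or_ne v u with rfl | hne
  · exact le_refl _
  have hfe : ∀ a b : EuclideanSpace ℝ (Fin d), ‖a‖ = ‖b‖ → f a = f b := fun a b h =>
    le_antisymm (hf b a h.ge) (hf a b h.le)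
  set w := v - u with hwdef
  have hw0 : w ≠ 0 := sub_ne_zero.mpr hne
  have hw' : ‖w‖ ≠ 0 := norm_ne_zero_iff.mpr hw0
  set m : EuclideanSpace ℝ (Fin d) := (2:ℝ)⁻¹ • (u + v) with hmdef
  set R := Submodule.reflection (ℝ ∙ w)ᗮ with hRdef
  set σ : EuclideanSpace ℝ (Fin d) → EuclideanSpace ℝ (Fin d) := fun x => m + R (x - m) with hσdef
  have hu' : u = m - (2:ℝ)⁻¹ • w := by rw [hmdef, hwdef]; match_scalars <;> ring
  have hv' : v = m + (2:ℝ)⁻¹ • w := by rw [hmdef, hwdef]; match_scalars <;> ring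
  have hσx : ∀ x, σ x = x - (2 * ⟪w, x - m⟫ / ‖w‖ ^ 2) • w := by
    intro x
    rw [hσdef]
    simp only [hRdef, aux_refl w hw0]
    abel
  have hσu : σ u = v := by
    rw [hσx]
    have h1 : u - m = -((2:ℝ)⁻¹ • w) := by rw [hu']; abel
    rw [h1, inner_neg_right, real_inner_smul_right, real_inner_self_eq_norm_sq]
    have hcoef : 2 * -((2:ℝ)⁻¹ * ‖w‖ ^ 2) / ‖w‖ ^ 2 = -1 := by field_simp
    rw [hcoef, neg_one_smul, sub_neg_eq_add, hwdef]
    abel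
  have hσv : σ v = u := by
    rw [hσx]
    have h1 : v - m = (2:ℝ)⁻¹ • w := by rw [hv']; abel
    rw [h1, real_inner_smul_right, real_inner_self_eq_norm_sq]
    have hcoef : 2 * ((2:ℝ)⁻¹ * ‖w‖ ^ 2) / ‖w‖ ^ 2 = 1 := by field_simp
    rw [hcoef, one_smul, hwdef]
    abel
  have hiso : ∀ x y, ‖σ x - σ y‖ = ‖x - y‖ := by
    intro x y
    have h1 : σ x - σ y = R (x - y) := by
      rw [hσdef]; simp only
      rw [show m + R (x - m) - (m + R (y - m)) = R (x - m) - R (y - m) by abel, ← map_sub]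
      congr 1; abel
    rw [h1, LinearIsometryEquiv.norm_map]
  have hmp : MeasurePreserving σ volume volume := by
    have h1 : MeasurePreserving (fun x : EuclideanSpace ℝ (Fin d) => x - m) volume volume :=
      measurePreserving_sub_right volume m
    have h2 : MeasurePreserving (fun x : EuclideanSpace ℝ (Fin d) => m + x) volume volume :=
      measurePreserving_add_left volume m
    exact (h2.comp R.measurePreserving).comp h1
  have hemb : MeasurableEmbedding σ := by
    have hc : Continuous σ := by
      rw [hσdef]
      exact continuous_const.add (R.continuous.comp (continuous_id.sub continuous_const))
    have hinj : Function.Injective σ := by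
      intro a b hab
      have h3 := hiso a b
      rw [hab, sub_self, norm_zero] at h3
      exact sub_eq_zero.mp (norm_eq_zero.mp h3.symm)
    exact hc.measurableEmbedding hinj
  have hs : 0 ≤ ⟪w, m⟫ := by
    rw [hwdef, hmdef, auxC u v]
    have h1 : ‖u‖ ^ 2 ≤ ‖v‖ ^ 2 := by nlinarith [norm_nonneg u, norm_nonneg v]
    nlinarith
  clear_value σ R
  set φ : EuclideanSpace ℝ (Fin d) → ℝ := fun x => f (v - x) * g x - f (u - x) * g x with hφdef
  have hkey : ∀ x, φ x + φ (σ x) ≤ 0 := by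
    intro x
    have e3 : ⟪w, x⟫ = ⟪w, x - m⟫ + ⟪w, m⟫ := by rw [inner_sub_right]; ring
    have hA : ‖x - u‖ ^ 2 - ‖x - v‖ ^ 2 = 2 * ⟪w, x - m⟫ := by
      have e1 : x - u = (x - m) + (2:ℝ)⁻¹ • w := by rw [hu']; abel
      have e2 : x - v = (x - m) - (2:ℝ)⁻¹ • w := by rw [hv']; abel
      rw [e1, e2]
      exact auxA (x - m) w
    have hB : ‖σ x‖ ^ 2 - ‖x‖ ^ 2 = -2 * (2 * ⟪w, x - m⟫ / ‖w‖ ^ 2) * ⟪w, m⟫ := by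
      have h0 := auxB x w (2 * ⟪w, x - m⟫ / ‖w‖ ^ 2)
      rw [e3] at h0
      rw [hσx x, h0]
      have hcw : 2 * ⟪w, x - m⟫ / ‖w‖ ^ 2 * ‖w‖ ^ 2 = 2 * ⟪w, x - m⟫ :=
        div_mul_cancel₀ _ (pow_ne_zero 2 hw')
      linear_combination (2 * ⟪w, x - m⟫ / ‖w‖ ^ 2) * hcw
    have hswap1 : f (v - σ x) = f (u - x) := by
      apply hfe
      calc ‖v - σ x‖ = ‖σ u - σ x‖ := by rw [hσu]
        _ = ‖u - x‖ := hiso u x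
    have hswap2 : f (u - σ x) = f (v - x) := by
      apply hfe
      calc ‖u - σ x‖ = ‖σ v - σ x‖ := by rw [hσv]
        _ = ‖v - x‖ := hiso v x
    have hid : φ x + φ (σ x) = (f (v - x) - f (u - x)) * (g x - g (σ x)) := by
      simp only [hφdef, hswap1, hswap2]
      ring
    rw [hid]
    rcases le_total (⟪w, x - m⟫ : ℝ) 0 with ht | ht
    · have h1 : ‖u - x‖ ≤ ‖v - x‖ := by
        rw [norm_sub_rev u x, norm_sub_rev v x]
        nlinarith [norm_nonneg (x - u), norm_nonneg (x - v)]
      have hcle : 2 * ⟪w, x - m⟫ / ‖w‖ ^ 2 ≤ 0 :=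
        div_nonpos_of_nonpos_of_nonneg (by linarith) (sq_nonneg _)
      have h2 : ‖x‖ ≤ ‖σ x‖ := by
        nlinarith [norm_nonneg x, norm_nonneg (σ x), mul_nonneg (neg_nonneg.mpr hcle) hs]
      have ff : f (v - x) - f (u - x) ≤ 0 := sub_nonpos.mpr (hf (u - x) (v - x) h1)
      have gg : 0 ≤ g x - g (σ x) := sub_nonneg.mpr (hg x (σ x) h2)
      nlinarith
    · have h1 : ‖v - x‖ ≤ ‖u - x‖ := by
        rw [norm_sub_rev u x, norm_sub_rev v x]
        nlinarith [norm_nonneg (x - u), norm_nonneg (x - v)]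
      have hcge : 0 ≤ 2 * ⟪w, x - m⟫ / ‖w‖ ^ 2 :=
        div_nonneg (by linarith) (sq_nonneg _)
      have h2 : ‖σ x‖ ≤ ‖x‖ := by
        nlinarith [norm_nonneg x, norm_nonneg (σ x), mul_nonneg hcge hs]
      have ff : 0 ≤ f (v - x) - f (u - x) := sub_nonneg.mpr (hf (v - x) (u - x) h1)
      have gg : g x - g (σ x) ≤ 0 := sub_nonpos.mpr (hg (σ x) x h2)
      nlinarith
  have hφint : Integrable φ := (hint v).sub (hint u)
  have hφσint : Integrable (φ ∘ σ) := (hmp.integrable_comp_emb hemb).mpr hφint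
  have hcomp : (∫ x, φ (σ x)) = ∫ x, φ x := hmp.integral_comp hemb φ
  have h2 : (∫ x, φ x) + ∫ x, φ (σ x) ≤ 0 := by
    have h0 : (∫ x, (φ x + (φ ∘ σ) x)) ≤ 0 := integral_nonpos fun x => hkey x
    rw [integral_add hφint hφσint] at h0
    exact h0
  have h4 : (∫ x, φ x) ≤ 0 := by linarith
  have h5 : (∫ x, φ x) = (∫ x, f (v - x) * g x) - ∫ x, f (u - x) * g x :=
    integral_sub (hint v) (hint u)
  linarith

open scoped Convolution


/-- The density `ψ(y) = V_r(0,y) / V_r²` of a single jump of the Lévy process `ξ^{(r)}`. -/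
noncomputable def psiFn (d : ℕ) (r : ℝ) (y : EuclideanSpace ℝ (Fin d)) : ℝ :=
  (volume (ball (0 : EuclideanSpace ℝ (Fin d)) r ∩ ball y r)).toReal /
    (volume (ball (0 : EuclideanSpace ℝ (Fin d)) r)).toReal ^ 2

/-- `convPow d ψ n = ψ^{*(n+1)}`, the `(n+1)`-fold convolution power of `ψ`. -/
noncomputable def convPow (d : ℕ) (ψ : EuclideanSpace ℝ (Fin d) → ℝ) :
    ℕ → EuclideanSpace ℝ (Fin d) → ℝ
  | 0 => ψ
  | n + 1 => fun x => ∫ y, convPow d ψ n (x - y) * ψ y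

theorem psi_conv_powers (d : ℕ) (hd : 1 ≤ d) (r : ℝ) (hr : 0 < r) :
    (∫ y, psiFn d r y) = 1 ∧
      ∀ n : ℕ, Continuous (convPow d (psiFn d r) n) ∧
        ∀ y y' : EuclideanSpace ℝ (Fin d), ‖y‖ ≤ ‖y'‖ →
          convPow d (psiFn d r) n y' ≤ convPow d (psiFn d r) n y := by
  classical
  haveI hnt : Nontrivial (EuclideanSpace ℝ (Fin d)) := by
    refine ⟨0, EuclideanSpace.single ⟨0, hd⟩ 1, fun h => ?_⟩
    have h2 := congrArg (· ⟨0, hd⟩) h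
    simp [EuclideanSpace.single_apply] at h2
  set F : EuclideanSpace ℝ (Fin d) → ℝ :=
    (ball (0 : EuclideanSpace ℝ (Fin d)) r).indicator (1 : EuclideanSpace ℝ (Fin d) → ℝ) with hF
  set V : ℝ := (volume (ball (0 : EuclideanSpace ℝ (Fin d)) r)).toReal with hV
  have hVpos : 0 < V :=
    ENNReal.toReal_pos (measure_ball_pos volume 0 hr).ne' measure_ball_lt_top.ne
  have hFmeas : Measurable F := measurable_const.indicator measurableSet_ball
  have hFint : Integrable F :=
    (integrable_indicator_iff measurableSet_ball).mpr
      ((integrableOn_const_iff).mpr (Or.inr measure_ball_lt_top))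
  have hFprod : ∀ y : EuclideanSpace ℝ (Fin d), (fun x => F (y - x) * F x) =
      (ball (0 : EuclideanSpace ℝ (Fin d)) r ∩ ball y r).indicator
        (1 : EuclideanSpace ℝ (Fin d) → ℝ) := by
    intro y
    funext x
    have hmem : (y - x ∈ ball (0 : EuclideanSpace ℝ (Fin d)) r) = (x ∈ ball y r) := by
      rw [mem_ball, mem_ball, dist_eq_norm, dist_eq_norm, sub_zero, norm_sub_rev]
    rw [hF]
    simp only [Set.indicator_apply, Set.mem_inter_iff, hmem, Pi.one_apply]
    by_cases h1 : x ∈ ball (0 : EuclideanSpace ℝ (Fin d)) r <;>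
      by_cases h2 : x ∈ ball y r <;> simp [h1, h2]
  have hpsi_eq : ∀ y, psiFn d r y = (∫ x, F (y - x) * F x) * (V ^ 2)⁻¹ := by
    intro y
    rw [psiFn, hFprod y, integral_indicator_one (measurableSet_ball.inter measurableSet_ball),
      div_eq_mul_inv]
    rfl
  have hψnn : ∀ y, 0 ≤ psiFn d r y := fun y => div_nonneg ENNReal.toReal_nonneg (by positivity)
  have hψ0 : ∀ x : EuclideanSpace ℝ (Fin d), 2 * r < ‖x‖ → psiFn d r x = 0 := by
    intro x hx
    have hempty : ball (0 : EuclideanSpace ℝ (Fin d)) r ∩ ball x r = ∅ := by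
      ext z
      simp only [Set.mem_inter_iff, mem_ball, Set.mem_empty_iff_false, iff_false, not_and]
      intro h1 h2
      have h3 : dist (0 : EuclideanSpace ℝ (Fin d)) x ≤ dist 0 z + dist z x := dist_triangle _ _ _
      rw [dist_zero_left] at h3
      rw [dist_comm] at h1
      rw [dist_zero_left] at h1
      linarith [dist_zero_left z]
    rw [psiFn, hempty]
    simp
  have hψcont : Continuous (psiFn d r) := by
    have hF01 : ∀ z, ‖F z‖ ≤ 1 := by
      intro z
      rw [hF, Set.indicator_apply]
      split <;> simp
    have hFnn : ∀ z, 0 ≤ F z := by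
      intro z
      rw [hF, Set.indicator_apply]
      split <;> simp
    have h0 : Continuous fun y => ∫ x, F (y - x) * F x := by
      rw [continuous_iff_continuousAt]
      intro y₀
      apply continuousAt_of_dominated (bound := F)
      · exact Filter.Eventually.of_forall fun y =>
          ((hFmeas.comp (measurable_const.sub measurable_id)).mul hFmeas).aestronglyMeasurable
      · refine Filter.Eventually.of_forall fun y => ae_of_all _ fun x => ?_
        rw [norm_mul]
        calc ‖F (y - x)‖ * ‖F x‖ ≤ 1 * ‖F x‖ :=
              mul_le_mul_of_nonneg_right (hF01 _) (norm_nonneg _)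
          _ = F x := by rw [one_mul, Real.norm_eq_abs, abs_of_nonneg (hFnn x)]
      · exact hFint
      · have hsph : ∀ᵐ x : EuclideanSpace ℝ (Fin d) ∂volume, x ∉ sphere y₀ r :=
          measure_eq_zero_iff_ae_notMem.mp (Measure.addHaar_sphere volume y₀ r)
        filter_upwards [hsph] with x hx
        apply ContinuousAt.mul _ continuousAt_const
        have hxne : ‖y₀ - x‖ ≠ r := by
          intro hcontra
          apply hx
          rw [mem_sphere, dist_comm, dist_eq_norm]
          exact hcontra
        rcases lt_or_gt_of_ne hxne with hlt | hgt
        · have hmem : ball x r ∈ nhds y₀ :=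
            isOpen_ball.mem_nhds (by rw [mem_ball, dist_eq_norm]; exact hlt)
          have hev : (fun y => F (y - x)) =ᶠ[nhds y₀] fun _ => (1:ℝ) := by
            filter_upwards [hmem] with y hy
            have hy' : y - x ∈ ball (0 : EuclideanSpace ℝ (Fin d)) r := by
              rw [mem_ball, dist_eq_norm, sub_zero]
              rw [mem_ball, dist_eq_norm] at hy
              exact hy
            rw [hF, Set.indicator_of_mem hy']
            rfl
          exact continuousAt_const.congr hev.symm
        · have hmem : (closedBall x r)ᶜ ∈ nhds y₀ := by
            apply isOpen_compl_iff.mpr Metric.isClosed_closedBall |>.mem_nhds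
            rw [Set.mem_compl_iff, mem_closedBall, not_le, dist_eq_norm]
            exact hgt
          have hev : (fun y => F (y - x)) =ᶠ[nhds y₀] fun _ => (0:ℝ) := by
            filter_upwards [hmem] with y hy
            rw [Set.mem_compl_iff, mem_closedBall, not_le, dist_eq_norm] at hy
            have hy' : y - x ∉ ball (0 : EuclideanSpace ℝ (Fin d)) r := by
              rw [mem_ball, dist_eq_norm, sub_zero, not_lt]
              exact hy.le
            rw [hF, Set.indicator_of_notMem hy']
          exact continuousAt_const.congr hev.symm
    have heq : psiFn d r = fun y => (∫ x, F (y - x) * F x) * (V ^ 2)⁻¹ := funext hpsi_eq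
    rw [heq]
    exact h0.mul continuous_const
  have hψsupp : HasCompactSupport (psiFn d r) := by
    apply HasCompactSupport.intro (isCompact_closedBall (0 : EuclideanSpace ℝ (Fin d)) (2 * r))
    intro x hx
    apply hψ0
    rw [mem_closedBall, dist_zero_right, not_le] at hx
    exact hx
  have hψint : Integrable (psiFn d r) := hψcont.integrable_of_hasCompactSupport hψsupp
  have hFmono : ∀ a b : EuclideanSpace ℝ (Fin d), ‖a‖ ≤ ‖b‖ → F b ≤ F a := by
    intro a b hab
    rw [hF, Set.indicator_apply, Set.indicator_apply]
    by_cases hb : b ∈ ball (0 : EuclideanSpace ℝ (Fin d)) r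
    · have ha : a ∈ ball (0 : EuclideanSpace ℝ (Fin d)) r := by
        rw [mem_ball, dist_zero_right] at hb ⊢
        exact lt_of_le_of_lt hab hb
      simp [ha, hb]
    · simp only [hb, if_false]
      split <;> norm_num
  have hFFint : ∀ u, Integrable fun x => F (u - x) * F x := by
    intro u
    rw [hFprod u]
    refine (integrable_indicator_iff (measurableSet_ball.inter measurableSet_ball)).mpr
      ((integrableOn_const_iff).mpr (Or.inr ?_))
    exact lt_of_le_of_lt (measure_mono Set.inter_subset_left) measure_ball_lt_top
  have hψmono : ∀ y y' : EuclideanSpace ℝ (Fin d), ‖y‖ ≤ ‖y'‖ → psiFn d r y' ≤ psiFn d r y := by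
    intro y y' h
    rw [hpsi_eq y, hpsi_eq y']
    exact mul_le_mul_of_nonneg_right (conv_mono F F hFmono hFmono hFFint y y' h) (by positivity)
  have hψint1 : (∫ y, psiFn d r y) = 1 := by
    have h1 : psiFn d r = fun y => (F ⋆[ContinuousLinearMap.mul ℝ ℝ] F) y * (V ^ 2)⁻¹ := by
      funext y
      rw [hpsi_eq y]
      congr 1
      have hcomm : (fun x => F (y - x) * F x) = fun x => F x * F (y - x) := by
        funext x; ring
      rw [hcomm, convolution_def]
      simp only [ContinuousLinearMap.mul_apply']
    rw [h1, integral_mul_const,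
      integral_convolution (ContinuousLinearMap.mul ℝ ℝ) hFint hFint,
      ContinuousLinearMap.mul_apply']
    have hFval : (∫ x, F x) = V := by
      rw [hF, integral_indicator_one measurableSet_ball]
      rfl
    rw [hFval, pow_two]
    field_simp
  refine ⟨hψint1, ?_⟩
  have H : ∀ n : ℕ, Continuous (convPow d (psiFn d r) n) ∧
      (∀ x, 0 ≤ convPow d (psiFn d r) n x) ∧
      (∀ x : EuclideanSpace ℝ (Fin d), 2 * r * ((n : ℝ) + 1) < ‖x‖ → convPow d (psiFn d r) n x = 0) ∧
      (∀ y y' : EuclideanSpace ℝ (Fin d), ‖y‖ ≤ ‖y'‖ →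
        convPow d (psiFn d r) n y' ≤ convPow d (psiFn d r) n y) := by
    intro n
    induction n with
    | zero =>
      refine ⟨hψcont, hψnn, ?_, hψmono⟩
      intro x hx
      apply hψ0
      push_cast at hx
      linarith
    | succ n ih =>
      obtain ⟨ihc, ihnn, ihsupp, ihmono⟩ := ih
      have ihHCS : HasCompactSupport (convPow d (psiFn d r) n) := by
        apply HasCompactSupport.intro
          (isCompact_closedBall (0 : EuclideanSpace ℝ (Fin d)) (2 * r * ((n : ℝ) + 1)))
        intro x hx
        apply ihsupp
        rw [mem_closedBall, dist_zero_right, not_le] at hx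
        exact hx
      have ihint : Integrable (convPow d (psiFn d r) n) :=
        ihc.integrable_of_hasCompactSupport ihHCS
      obtain ⟨M, hM⟩ := ihc.bounded_above_of_compact_support ihHCS
      have hmulint : ∀ u : EuclideanSpace ℝ (Fin d),
          Integrable fun x => convPow d (psiFn d r) n (u - x) * psiFn d r x := by
        intro u
        apply Continuous.integrable_of_hasCompactSupport
        · exact (ihc.comp (continuous_const.sub continuous_id)).mul hψcont
        · exact hψsupp.mul_left
      refine ⟨?_, ?_, ?_, ?_⟩
      · show Continuous fun x => ∫ y, convPow d (psiFn d r) n (x - y) * psiFn d r y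
        rw [continuous_iff_continuousAt]
        intro x₀
        apply continuousAt_of_dominated (bound := fun y => M * ‖psiFn d r y‖)
        · exact Filter.Eventually.of_forall fun x =>
            ((ihc.comp (continuous_const.sub continuous_id)).mul hψcont).aestronglyMeasurable
        · refine Filter.Eventually.of_forall fun x => ae_of_all _ fun y => ?_
          rw [norm_mul]
          exact mul_le_mul_of_nonneg_right (hM _) (norm_nonneg _)
        · exact hψint.norm.const_mul M
        · exact ae_of_all _ fun y =>
            ((ihc.comp (continuous_id.sub continuous_const)).continuousAt).mul continuousAt_const
      · intro x
        apply integral_nonneg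
        intro y
        exact mul_nonneg (ihnn _) (hψnn _)
      · intro x hx
        show (∫ y, convPow d (psiFn d r) n (x - y) * psiFn d r y) = 0
        have hzero : ∀ y, convPow d (psiFn d r) n (x - y) * psiFn d r y = 0 := by
          intro y
          by_cases hy : 2 * r < ‖y‖
          · rw [hψ0 y hy, mul_zero]
          · push_neg at hy
            rw [ihsupp (x - y) ?_, zero_mul]
            have h3 := norm_sub_norm_le x y
            push_cast at hx
            linarith
        simp only [hzero, integral_zero]
      · intro y y' h
        show (∫ x, convPow d (psiFn d r) n (y' - x) * psiFn d r x) ≤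
          ∫ x, convPow d (psiFn d r) n (y - x) * psiFn d r x
        exact conv_mono _ _ ihmono hψmono hmulint y y' h
  exact fun n => ⟨(H n).1, (H n).2.2.2⟩
end

section
/- Let F : ℝ → ℝ be continuously differentiable and let λ ∈ (0,1) satisfy F(λ) = 0, F'(λ) > 0, and F(x) ≠ 0 for every x ∈ [0,1] with x ≠ λ. Define R₁ : [0,1] → ℝ by R₁(x) = ∫_0^1 F'(x + t(λ − x)) dt. Then inf_{x∈[0,1]} R₁(x) > 0. -/
open MeasureTheory

theorem R1_inf_pos (F : ℝ → ℝ) (hF : ContDiff ℝ 1 F) (l : ℝ)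
    (hl : l ∈ Set.Ioo (0 : ℝ) 1) (hFl : F l = 0) (hF'l : 0 < deriv F l)
    (hFne : ∀ x ∈ Set.Icc (0 : ℝ) 1, x ≠ l → F x ≠ 0) :
    0 < ⨅ x : Set.Icc (0 : ℝ) 1, ∫ t in (0 : ℝ)..1, deriv F (↑x + t * (l - ↑x)) := by
  obtain ⟨hl0, hl1⟩ := hl
  have hFc : Continuous F := hF.continuous
  have hF' : Continuous (deriv F) := hF.continuous_deriv le_rfl
  set g : ℝ → ℝ := fun x => ∫ t in (0:ℝ)..1, deriv F (x + t * (l - x)) with hg_def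
  -- continuity of g
  have hgc : Continuous g := by
    apply intervalIntegral.continuous_parametric_intervalIntegral_of_continuous'
    exact hF'.comp (by fun_prop)
  -- FTC: (l - x) * g x = F l - F x
  have hftc : ∀ x : ℝ, (l - x) * g x = F l - F x := by
    intro x
    have hderiv : ∀ t ∈ Set.uIcc (0:ℝ) 1,
        HasDerivAt (fun t => F (x + t * (l - x))) ((l - x) * deriv F (x + t * (l - x))) t := by
      intro t _
      have h1 : HasDerivAt (fun t : ℝ => x + t * (l - x)) (l - x) t := by
        simpa using ((hasDerivAt_id t).mul_const (l - x)).const_add x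
      have h2 : HasDerivAt F (deriv F (x + t * (l - x))) (x + t * (l - x)) :=
        ((hF.differentiable one_ne_zero) _).hasDerivAt
      simpa [mul_comm, Function.comp_def] using h2.comp t h1
    have hint : IntervalIntegrable (fun t => (l - x) * deriv F (x + t * (l - x)))
        volume 0 1 := (Continuous.intervalIntegrable (by fun_prop)) _ _
    have := intervalIntegral.integral_eq_sub_of_hasDerivAt hderiv hint
    rw [intervalIntegral.integral_const_mul] at this
    rw [show x + 1 * (l - x) = l by ring, show x + 0 * (l - x) = x by ring] at this
    exact this
  -- g is positive on [0,1]
  have hgpos : ∀ x ∈ Set.Icc (0:ℝ) 1, 0 < g x := by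
    intro x hx
    rcases eq_or_ne x l with rfl | hxl
    · have : g x = deriv F x := by simp [hg_def]
      rw [this]; exact hF'l
    · have hlx : l - x ≠ 0 := sub_ne_zero.mpr (Ne.symm hxl)
      have hgx : g x = F x / (x - l) := by
        have h := hftc x
        rw [hFl, zero_sub] at h
        rw [eq_div_iff (sub_ne_zero.mpr hxl)]
        linear_combination -h
      rw [hgx]
      -- sign analysis
      have hd : HasDerivAt F (deriv F l) l := ((hF.differentiable one_ne_zero) l).hasDerivAt
      have hslope := hasDerivAt_iff_tendsto_slope.mp hd
      have hev : ∀ᶠ y in nhdsWithin l {l}ᶜ, 0 < slope F l y :=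
        hslope.eventually (eventually_gt_nhds hF'l)
      rcases hxl.lt_or_gt with hlt | hlt
      · -- x < l : show F x < 0
        have hne : (nhdsWithin l (Set.Ioo x l)).NeBot := by
          rw [← mem_closure_iff_nhdsWithin_neBot, closure_Ioo (ne_of_lt hlt)]
          exact ⟨le_of_lt hlt, le_refl l⟩
        have hev' : ∀ᶠ y in nhdsWithin l (Set.Ioo x l), 0 < slope F l y :=
          hev.filter_mono (nhdsWithin_mono l (fun y hy => ne_of_lt hy.2))
        obtain ⟨y, hsy, hyI⟩ := (hev'.and self_mem_nhdsWithin).exists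
        have hFy : F y < 0 := by
          have hsl : slope F l y = F y / (y - l) := by
            simp [slope_def_field, hFl]
          rw [hsl] at hsy
          rcases div_pos_iff.mp hsy with ⟨h1, h2⟩ | ⟨h1, h2⟩
          · linarith [hyI.2]
          · exact h1
        have hFx : F x < 0 := by
          rcases lt_or_gt_of_ne (hFne x hx hxl) with h | h
          · exact h
          · exfalso
            obtain ⟨z, hz, hFz⟩ := intermediate_value_Icc' (le_of_lt hyI.1)
              hFc.continuousOn (⟨le_of_lt hFy, le_of_lt h⟩ : (0:ℝ) ∈ Set.Icc (F y) (F x))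
            exact hFne z ⟨le_trans hx.1 hz.1,
                le_trans hz.2 (le_of_lt (lt_trans hyI.2 hl1))⟩
              (ne_of_lt (lt_of_le_of_lt hz.2 hyI.2)) hFz
        exact div_pos_of_neg_of_neg hFx (sub_neg.mpr hlt)
      · -- l < x : show 0 < F x
        have hne : (nhdsWithin l (Set.Ioo l x)).NeBot := by
          rw [← mem_closure_iff_nhdsWithin_neBot, closure_Ioo (ne_of_lt hlt)]
          exact ⟨le_refl l, le_of_lt hlt⟩
        have hev' : ∀ᶠ y in nhdsWithin l (Set.Ioo l x), 0 < slope F l y :=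
          hev.filter_mono (nhdsWithin_mono l (fun y hy => ne_of_gt hy.1))
        obtain ⟨y, hsy, hyI⟩ := (hev'.and self_mem_nhdsWithin).exists
        have hFy : 0 < F y := by
          have hsl : slope F l y = F y / (y - l) := by
            simp [slope_def_field, hFl]
          rw [hsl] at hsy
          rcases div_pos_iff.mp hsy with ⟨h1, h2⟩ | ⟨h1, h2⟩
          · exact h1
          · linarith [hyI.1]
        have hFx : 0 < F x := by
          rcases lt_or_gt_of_ne (hFne x hx hxl) with h | h
          · exfalso
            obtain ⟨z, hz, hFz⟩ := intermediate_value_Icc' (le_of_lt hyI.2)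
              hFc.continuousOn (⟨le_of_lt h, le_of_lt hFy⟩ : (0:ℝ) ∈ Set.Icc (F x) (F y))
            exact hFne z ⟨le_trans (le_of_lt (lt_trans hl0 hyI.1)) hz.1,
                le_trans hz.2 hx.2⟩
              (ne_of_gt (lt_of_lt_of_le hyI.1 hz.1)) hFz
          · exact h
        exact div_pos hFx (sub_pos.mpr hlt)
  -- min over compact set
  obtain ⟨x0, hx0, hmin⟩ := isCompact_Icc.exists_isMinOn (Set.nonempty_Icc.mpr zero_le_one)
    hgc.continuousOn
  have h1 : 0 < g x0 := hgpos x0 hx0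
  have h2 : g x0 ≤ ⨅ x : Set.Icc (0:ℝ) 1, g x :=
    le_ciInf fun x => hmin x.2
  exact lt_of_lt_of_le h1 h2
end
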